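/- The function v(z) := e^{−λz}(α + ∫₀^z e^{λs} F(s) ds) (the integral taken along the segment from 0 to z) is entire, satisfies v' + λv = F with v(0) = α, and obeys the bound |v(z)| ≤ [C_F γ₁^{si} γ₂^{tj} (i+1) (si+tj+c+|z|)^{si+tj+1} / ((si+tj+1) i^{i}) + |α|] · e^{−Re(λz)} for all z ∈ ℂ. -/

import Mathlib

open intervalIntegral MeasureTheory Metric Set Complex

open intervalIntegral MeasureTheory Metric Set Complex

lemma aux_primitive (h : ℂ → ℂ) (hh : Differentiable ℂ h) (z : ℂ) :
    HasDerivAt (fun w : ℂ => w * ∫ τ in (0:ℝ)..1, h ((τ:ℂ) * w)) (h z) z := by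
  have hc : Continuous h := hh.continuous
  have hcd : Continuous (deriv h) := (hh.contDiff (n := 1)).continuous_deriv le_rfl
  have hcont : ∀ w : ℂ, Continuous fun τ : ℝ => h ((τ:ℂ) * w) := fun w =>
    hc.comp (Complex.continuous_ofReal.mul continuous_const)
  have hcont' : ∀ w : ℂ, Continuous fun τ : ℝ => (τ:ℂ) * deriv h ((τ:ℂ) * w) := fun w =>
    Complex.continuous_ofReal.mul (hcd.comp (Complex.continuous_ofReal.mul continuous_const))
  obtain ⟨C, hC⟩ := (isCompact_closedBall (0:ℂ) (‖z‖ + 1)).exists_bound_of_continuousOn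
    hcd.continuousOn
  have hΦd : HasDerivAt (fun w : ℂ => ∫ τ in (0:ℝ)..1, h ((τ:ℂ) * w))
      (∫ τ in (0:ℝ)..1, (τ:ℂ) * deriv h ((τ:ℂ) * z)) z := by
    refine (intervalIntegral.hasDerivAt_integral_of_dominated_loc_of_deriv_le
      (F := fun w τ => h ((τ:ℂ) * w)) (F' := fun w τ => (τ:ℂ) * deriv h ((τ:ℂ) * w))
      (bound := fun _ => max C 0) (ball_mem_nhds z one_pos) ?_ ?_ ?_ ?_ ?_ ?_).2
    · filter_upwards with w using (hcont w).aestronglyMeasurable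
    · exact (hcont z).intervalIntegrable _ _
    · exact (hcont' z).aestronglyMeasurable
    · filter_upwards with τ
      intro hτ x hx
      rw [Set.uIoc_of_le (by norm_num : (0:ℝ) ≤ 1)] at hτ
      have hτ0 : 0 < τ := hτ.1
      have hτ1 : τ ≤ 1 := hτ.2
      have hmem : (τ:ℂ) * x ∈ closedBall (0:ℂ) (‖z‖ + 1) := by
        rw [mem_closedBall, dist_zero_right, norm_mul, Complex.norm_real,
          Real.norm_eq_abs, abs_of_pos hτ0]
        have hx1 : ‖x - z‖ < 1 := mem_ball_iff_norm.mp hx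
        have hx2 : ‖x‖ ≤ ‖z‖ + ‖x - z‖ := by
          calc ‖x‖ = ‖z + (x - z)‖ := by ring_nf
            _ ≤ ‖z‖ + ‖x - z‖ := norm_add_le _ _
        have hx' : ‖x‖ ≤ ‖z‖ + 1 := by
          linarith
        have h0 : (0:ℝ) ≤ ‖x‖ := norm_nonneg _
        have h0' : (0:ℝ) ≤ ‖z‖ := norm_nonneg z
        nlinarith
      calc ‖(τ:ℂ) * deriv h ((τ:ℂ) * x)‖ = |τ| * ‖deriv h ((τ:ℂ) * x)‖ := by
            rw [norm_mul, Complex.norm_real, Real.norm_eq_abs]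
        _ ≤ 1 * C := by
            refine mul_le_mul (by rw [abs_of_pos hτ0]; exact hτ1) (hC _ hmem) (norm_nonneg _)
              one_pos.le
        _ ≤ max C 0 := by simpa using le_max_left C 0
    · exact intervalIntegrable_const
    · filter_upwards with τ
      intro hτ x hx
      have hin : HasDerivAt (fun w : ℂ => (τ:ℂ) * w) (τ:ℂ) x := by
        simpa using (hasDerivAt_id x).const_mul (τ:ℂ)
      have hcmp : HasDerivAt (fun w : ℂ => h ((τ:ℂ) * w)) (deriv h ((τ:ℂ) * x) * (τ:ℂ)) x :=
        (hh ((τ:ℂ) * x)).hasDerivAt.comp x hin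
      rw [mul_comm]
      exact hcmp
  have hkey : (∫ τ in (0:ℝ)..1, h ((τ:ℂ) * z)) +
      (∫ τ in (0:ℝ)..1, (τ:ℂ) * deriv h ((τ:ℂ) * z)) * z = h z := by
    have hFTC : ∀ τ ∈ Set.uIcc (0:ℝ) 1,
        HasDerivAt (fun τ : ℝ => (τ:ℂ) * h ((τ:ℂ) * z))
          (h ((τ:ℂ) * z) + (τ:ℂ) * deriv h ((τ:ℂ) * z) * z) τ := by
      intro τ _
      have hg : HasDerivAt (fun u : ℂ => u * h (u * z))
          (1 * h ((τ:ℂ) * z) + (τ:ℂ) * (deriv h ((τ:ℂ) * z) * z)) (τ:ℂ) := by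
        have hlin : HasDerivAt (fun u : ℂ => u * z) z (τ:ℂ) := by
          simpa using (hasDerivAt_id (τ:ℂ)).mul_const z
        have hinner : HasDerivAt (fun u : ℂ => h (u * z)) (deriv h ((τ:ℂ) * z) * z) (τ:ℂ) :=
          (hh ((τ:ℂ) * z)).hasDerivAt.comp (τ:ℂ) hlin
        exact (hasDerivAt_id (τ:ℂ)).mul hinner
      have := hg.comp_ofReal
      convert this using 1
      ring
    have hint : IntervalIntegrable
        (fun τ : ℝ => h ((τ:ℂ) * z) + (τ:ℂ) * deriv h ((τ:ℂ) * z) * z) volume 0 1 :=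
      ((hcont z).add ((hcont' z).mul continuous_const)).intervalIntegrable _ _
    have := intervalIntegral.integral_eq_sub_of_hasDerivAt hFTC hint
    rw [intervalIntegral.integral_add ((hcont z).intervalIntegrable _ _)
      (((hcont' z).fun_mul continuous_const).intervalIntegrable _ _),
      intervalIntegral.integral_mul_const] at this
    simpa using this
  have := (hasDerivAt_id z).fun_mul hΦd
  refine this.congr_deriv ?_
  rw [← hkey]
  simp only [id_eq, one_mul]
  ring


theorem stmt_7 (l α : ℂ) (γ₁ γ₂ s t c C_F : ℝ) (i j : ℕ)
    (hl : 0 < l.re) (hγ₁ : 0 < γ₁) (hγ₂ : 0 < γ₂) (hs : 0 < s) (ht : 0 < t)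
    (hc : 0 < c) (hCF : 0 < C_F)
    (F : ℂ → ℂ) (hF : Differentiable ℂ F)
    (hFb : ∀ z : ℂ, ‖F z‖ ≤
      C_F * γ₁ ^ (s * (i:ℝ)) * γ₂ ^ (t * (j:ℝ)) * Real.exp (-(l * z).re) * ((i:ℝ) + 1) *
        (s * (i:ℝ) + t * (j:ℝ) + c + ‖z‖) ^ (s * (i:ℝ) + t * (j:ℝ)) / (i:ℝ) ^ i) :
    let v : ℂ → ℂ := fun z => Complex.exp (-(l * z)) *
      (α + z * ∫ τ in (0:ℝ)..1, Complex.exp (l * ((τ:ℂ) * z)) * F ((τ:ℂ) * z))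
    Differentiable ℂ v ∧ v 0 = α ∧ (∀ z : ℂ, deriv v z + l * v z = F z) ∧
      ∀ z : ℂ, ‖v z‖ ≤
        (C_F * γ₁ ^ (s * (i:ℝ)) * γ₂ ^ (t * (j:ℝ)) * ((i:ℝ) + 1) *
            (s * (i:ℝ) + t * (j:ℝ) + c + ‖z‖) ^ (s * (i:ℝ) + t * (j:ℝ) + 1) /
            ((s * (i:ℝ) + t * (j:ℝ) + 1) * (i:ℝ) ^ i) + ‖α‖) *
          Real.exp (-(l * z).re) := by
  intro v
  have hv : ∀ z : ℂ, HasDerivAt (fun z : ℂ => Complex.exp (-(l * z)) *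
      (α + z * ∫ τ in (0:ℝ)..1, Complex.exp (l * ((τ:ℂ) * z)) * F ((τ:ℂ) * z)))
      (F z - l * (Complex.exp (-(l * z)) *
      (α + z * ∫ τ in (0:ℝ)..1, Complex.exp (l * ((τ:ℂ) * z)) * F ((τ:ℂ) * z)))) z := by
    intro z
    have hhd : Differentiable ℂ (fun w : ℂ => Complex.exp (l * w) * F w) :=
      (Complex.differentiable_exp.comp ((differentiable_const l).mul differentiable_id)).mul hF
    have hΨ : HasDerivAt (fun w : ℂ => w * ∫ τ in (0:ℝ)..1,
        Complex.exp (l * ((τ:ℂ) * w)) * F ((τ:ℂ) * w)) (Complex.exp (l * z) * F z) z :=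
      aux_primitive (fun w => Complex.exp (l * w) * F w) hhd z
    have he : HasDerivAt (fun w : ℂ => Complex.exp (-(l * w)))
        (Complex.exp (-(l * z)) * -(l * 1)) z := (((hasDerivAt_id z).const_mul l).neg).cexp
    have hsum : HasDerivAt (fun w : ℂ => α + w * ∫ τ in (0:ℝ)..1,
        Complex.exp (l * ((τ:ℂ) * w)) * F ((τ:ℂ) * w)) (Complex.exp (l * z) * F z) z := by
      simpa using (hasDerivAt_const z α).fun_add hΨ
    have hmul := he.fun_mul hsum
    have hee : Complex.exp (-(l * z)) * Complex.exp (l * z) = 1 := by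
      rw [← Complex.exp_add]; simp
    refine hmul.congr_deriv ?_
    linear_combination (F z) * hee
  refine ⟨fun z => (hv z).differentiableAt, ?_, ?_, ?_⟩
  · show Complex.exp (-(l * 0)) *
      (α + 0 * ∫ τ in (0:ℝ)..1, Complex.exp (l * ((τ:ℂ) * 0)) * F ((τ:ℂ) * 0)) = α
    simp
  · intro z
    have e : deriv v z = F z - l * v z := (hv z).deriv
    rw [e]; ring
  · intro z
    show ‖Complex.exp (-(l * z)) *
      (α + z * ∫ τ in (0:ℝ)..1, Complex.exp (l * ((τ:ℂ) * z)) * F ((τ:ℂ) * z))‖ ≤ _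
    have hii : (0:ℝ) < (i:ℝ) ^ i := by
      rcases Nat.eq_zero_or_pos i with h | h
      · simp [h]
      · exact pow_pos (by exact_mod_cast h) i
    set p : ℝ := s * (i:ℝ) + t * (j:ℝ) with hp
    set M : ℝ := s * (i:ℝ) + t * (j:ℝ) + c with hM
    set K : ℝ := C_F * γ₁ ^ (s * (i:ℝ)) * γ₂ ^ (t * (j:ℝ)) * ((i:ℝ) + 1) / (i:ℝ) ^ i with hK
    have hp0 : 0 ≤ p := by
      have h1 : 0 ≤ s * (i:ℝ) := mul_nonneg hs.le (Nat.cast_nonneg i)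
      have h2 : 0 ≤ t * (j:ℝ) := mul_nonneg ht.le (Nat.cast_nonneg j)
      rw [hp]; linarith
    have hM0 : 0 < M := by rw [hM, ← hp]; linarith
    have hK0 : 0 < K := by
      refine div_pos ?_ hii
      have := Real.rpow_pos_of_pos hγ₁ (s * (i:ℝ))
      have := Real.rpow_pos_of_pos hγ₂ (t * (j:ℝ))
      positivity
    set r : ℝ := ‖z‖ with hr
    have hr0 : 0 ≤ r := norm_nonneg z
    have hMr : 0 < M + r := by linarith
    -- continuity of the integrand
    have hcont : Continuous fun τ : ℝ => Complex.exp (l * ((τ:ℂ) * z)) * F ((τ:ℂ) * z) :=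
      (Complex.continuous_exp.comp (continuous_const.mul
        (Complex.continuous_ofReal.mul continuous_const))).mul
        (hF.continuous.comp (Complex.continuous_ofReal.mul continuous_const))
    have hgcont : Continuous fun τ : ℝ => K * (M + τ * r) ^ p := by
      refine continuous_const.mul ?_
      exact (continuous_const.add (continuous_id.mul continuous_const)).rpow_const
        fun x => Or.inr hp0
    -- pointwise bound
    have hpt : ∀ τ : ℝ, 0 ≤ τ →
        ‖Complex.exp (l * ((τ:ℂ) * z)) * F ((τ:ℂ) * z)‖ ≤ K * (M + τ * r) ^ p := by
      intro τ hτ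
      have habs : ‖(τ:ℂ) * z‖ = τ * r := by
        rw [norm_mul, Complex.norm_real, Real.norm_eq_abs, _root_.abs_of_nonneg hτ, hr]
      have hb := hFb ((τ:ℂ) * z)
      rw [habs] at hb
      have hE : Real.exp ((l * ((τ:ℂ) * z)).re) * Real.exp (-(l * ((τ:ℂ) * z)).re) = 1 := by
        rw [← Real.exp_add, add_neg_cancel, Real.exp_zero]
      calc ‖Complex.exp (l * ((τ:ℂ) * z)) * F ((τ:ℂ) * z)‖
          = Real.exp ((l * ((τ:ℂ) * z)).re) * ‖F ((τ:ℂ) * z)‖ := by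
            rw [norm_mul, Complex.norm_exp]
        _ ≤ Real.exp ((l * ((τ:ℂ) * z)).re) * (C_F * γ₁ ^ (s * (i:ℝ)) * γ₂ ^ (t * (j:ℝ)) *
              Real.exp (-(l * ((τ:ℂ) * z)).re) * ((i:ℝ) + 1) * (M + τ * r) ^ p / (i:ℝ) ^ i) :=
            mul_le_mul_of_nonneg_left hb (Real.exp_nonneg _)
        _ = K * (M + τ * r) ^ p := by
            rw [hK]
            linear_combination (C_F * γ₁ ^ (s * (i:ℝ)) * γ₂ ^ (t * (j:ℝ)) * ((i:ℝ) + 1) *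
              (M + τ * r) ^ p / (i:ℝ) ^ i) * hE
    -- bound on the integral
    have hΦb : ‖∫ τ in (0:ℝ)..1, Complex.exp (l * ((τ:ℂ) * z)) * F ((τ:ℂ) * z)‖ ≤
        ∫ τ in (0:ℝ)..1, K * (M + τ * r) ^ p := by
      refine (intervalIntegral.norm_integral_le_integral_norm zero_le_one).trans ?_
      refine intervalIntegral.integral_mono_on zero_le_one
        (hcont.norm.intervalIntegrable _ _) (hgcont.intervalIntegrable _ _) ?_
      intro τ hτ
      exact hpt τ hτ.1
    -- main estimate
    have key : r * ‖∫ τ in (0:ℝ)..1, Complex.exp (l * ((τ:ℂ) * z)) * F ((τ:ℂ) * z)‖ ≤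
        K * (M + r) ^ (p + 1) / (p + 1) := by
      rcases eq_or_lt_of_le hr0 with hrz | hrz
      · rw [← hrz, zero_mul]
        positivity
      · have hval : ∫ τ in (0:ℝ)..1, (M + τ * r) ^ p
            = r⁻¹ * (((M + r) ^ (p + 1) - M ^ (p + 1)) / (p + 1)) := by
          rw [show (fun τ : ℝ => (M + τ * r) ^ p) = (fun τ : ℝ => ((fun x : ℝ => x ^ p) (r * τ + M)))
            from funext fun τ => by rw [add_comm M (τ * r), mul_comm τ r]]
          rw [intervalIntegral.integral_comp_mul_add (fun x : ℝ => x ^ p) hrz.ne' M]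
          rw [mul_zero, zero_add, mul_one, integral_rpow (Or.inl (by linarith))]
          rw [smul_eq_mul, add_comm r M]
        have h1 : r * ‖∫ τ in (0:ℝ)..1, Complex.exp (l * ((τ:ℂ) * z)) * F ((τ:ℂ) * z)‖
            ≤ r * ∫ τ in (0:ℝ)..1, K * (M + τ * r) ^ p := by
          exact mul_le_mul_of_nonneg_left hΦb hr0
        rw [intervalIntegral.integral_const_mul, hval] at h1
        refine h1.trans ?_
        have hMp : 0 ≤ M ^ (p + 1) := Real.rpow_nonneg hM0.le _
        rw [show r * (K * (r⁻¹ * (((M + r) ^ (p + 1) - M ^ (p + 1)) / (p + 1))))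
            = K * (((M + r) ^ (p + 1) - M ^ (p + 1)) / (p + 1)) from by
          field_simp]
        have hp1 : (0:ℝ) < p + 1 := by linarith
        have hfin : ((M + r) ^ (p + 1) - M ^ (p + 1)) / (p + 1) ≤ (M + r) ^ (p + 1) / (p + 1) :=
          (div_le_div_iff_of_pos_right hp1).mpr (by linarith)
        calc K * (((M + r) ^ (p + 1) - M ^ (p + 1)) / (p + 1))
            ≤ K * ((M + r) ^ (p + 1) / (p + 1)) := mul_le_mul_of_nonneg_left hfin hK0.le
          _ = K * (M + r) ^ (p + 1) / (p + 1) := (mul_div_assoc _ _ _).symm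
    -- assemble
    have h2 : ‖Complex.exp (-(l * z)) *
        (α + z * ∫ τ in (0:ℝ)..1, Complex.exp (l * ((τ:ℂ) * z)) * F ((τ:ℂ) * z))‖
        = Real.exp (-(l * z).re) * ‖
          (α + z * ∫ τ in (0:ℝ)..1, Complex.exp (l * ((τ:ℂ) * z)) * F ((τ:ℂ) * z))‖ := by
      rw [norm_mul, Complex.norm_exp, Complex.neg_re]
    rw [h2, mul_comm]
    gcongr ?_ * Real.exp (-(l * z).re)
    calc ‖α + z * ∫ τ in (0:ℝ)..1, Complex.exp (l * ((τ:ℂ) * z)) * F ((τ:ℂ) * z)‖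
        ≤ ‖α‖ + ‖z * ∫ τ in (0:ℝ)..1,
            Complex.exp (l * ((τ:ℂ) * z)) * F ((τ:ℂ) * z)‖ := norm_add_le _ _
      _ = ‖α‖ + r * ‖∫ τ in (0:ℝ)..1,
            Complex.exp (l * ((τ:ℂ) * z)) * F ((τ:ℂ) * z)‖ := by rw [norm_mul, hr]
      _ ≤ ‖α‖ + K * (M + r) ^ (p + 1) / (p + 1) := by linarith [key]
      _ = C_F * γ₁ ^ (s * (i:ℝ)) * γ₂ ^ (t * (j:ℝ)) * ((i:ℝ) + 1) *
              (M + r) ^ (p + 1) / ((p + 1) * (i:ℝ) ^ i) + ‖α‖ := by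
          rw [hK]; field_simp; ring
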